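/- arXiv:1906.04932 — 2 statements merged into one kernel-verified Lean document; each statement's English description precedes it below -/
import Mathlib

section
/- Let q be a power of 2 and H a nonempty set of hyperplanes of PG(4,q) such that every point lies in 0, q^3/2, or (q^3+q^2)/2 members of H. Write h = |H|/(q^2/2). Then h is congruent to 0 or 1 modulo q, and q+1 divides h(h-2). -/
open Submodule Set

/-- Points of `PG(4,q)`: one-dimensional subspaces of `F^5`. -/
abbrev PGPoint (F : Type*) [Field F] := {W : Submodule F (Fin 5 → F) // Module.finrank F W = 1}
/-- Lines of `PG(4,q)`: two-dimensional subspaces of `F^5`. -/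
abbrev PGLine (F : Type*) [Field F] := {W : Submodule F (Fin 5 → F) // Module.finrank F W = 2}
/-- Planes of `PG(4,q)`: three-dimensional subspaces of `F^5`. -/
abbrev PGPlane (F : Type*) [Field F] := {W : Submodule F (Fin 5 → F) // Module.finrank F W = 3}
/-- Solids (hyperplanes) of `PG(4,q)`: four-dimensional subspaces of `F^5`. -/
abbrev PGSolid (F : Type*) [Field F] := {W : Submodule F (Fin 5 → F) // Module.finrank F W = 4}

variable {F : Type*} [Field F]

/-- The solids of `H` through the point `P`. -/
def solidsThrough (H : Set (PGSolid F)) (P : PGPoint F) : Set (PGSolid F) :=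
  {S ∈ H | P.1 ≤ S.1}

/-- Hypothesis (I): every point lies on `0`, `q^3/2` or `(q^3+q^2)/2` solids of `H`. -/
def CondI (q : ℕ) (H : Set (PGSolid F)) : Prop :=
  ∀ P : PGPoint F,
    (solidsThrough H P).ncard = 0 ∨
    2 * (solidsThrough H P).ncard = q ^ 3 ∨
    2 * (solidsThrough H P).ncard = q ^ 3 + q ^ 2

/-- A red point: lies on no solid of `H`. -/
def Red (H : Set (PGSolid F)) (P : PGPoint F) : Prop := (solidsThrough H P).ncard = 0

/-- A white point: lies on `q^3/2` solids of `H`. -/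
def White (q : ℕ) (H : Set (PGSolid F)) (P : PGPoint F) : Prop :=
  2 * (solidsThrough H P).ncard = q ^ 3

/-- A black point: lies on `(q^3+q^2)/2` solids of `H`. -/
def Black (q : ℕ) (H : Set (PGSolid F)) (P : PGPoint F) : Prop :=
  2 * (solidsThrough H P).ncard = q ^ 3 + q ^ 2

/-- The black points contained in a subspace `W`. -/
def blackIn (q : ℕ) (H : Set (PGSolid F)) (W : Submodule F (Fin 5 → F)) : Set (PGPoint F) :=
  {P : PGPoint F | Black q H P ∧ P.1 ≤ W}

section Aux

variable {F : Type*} [Field F] [Fintype F]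

instance finiteSubmodule5 : Finite (Submodule F (Fin 5 → F)) :=
  Finite.of_injective (fun W => (W : Set (Fin 5 → F))) SetLike.coe_injective

noncomputable instance fintypePGPoint : Fintype (PGPoint F) := Fintype.ofFinite _
noncomputable instance fintypePGSolid : Fintype (PGSolid F) := Fintype.ofFinite _

/-- Cardinality of a submodule of `F^5`. -/
lemma natCard_submodule (W : Submodule F (Fin 5 → F)) :
    Nat.card W = Fintype.card F ^ Module.finrank F W := by
  haveI : Fintype W := Fintype.ofFinite _
  rw [Nat.card_eq_fintype_card, Module.card_eq_pow_finrank (K := F)]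

open scoped Classical in
/-- Counting points inside a subspace `W` of `F^5`. -/
lemma card_points_le (W : Submodule F (Fin 5 → F)) :
    (Finset.univ.filter fun P : PGPoint F => P.1 ≤ W).card * (Fintype.card F - 1)
      = Fintype.card F ^ Module.finrank F W - 1 := by
  classical
  set q := Fintype.card F with hq
  have hv0 : (Pi.single 0 1 : Fin 5 → F) ≠ 0 := by
    intro hcontra
    have := congrFun hcontra 0
    simp at this
  set junk : PGPoint F := ⟨Submodule.span F {Pi.single 0 1}, finrank_span_singleton hv0⟩
    with hjunk
  set g : (Fin 5 → F) → PGPoint F := fun v =>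
    if hv : v = 0 then junk else ⟨Submodule.span F {v}, finrank_span_singleton hv⟩ with hg
  set s : Finset (Fin 5 → F) := Finset.univ.filter (fun v => v ∈ W ∧ v ≠ 0) with hs
  set t : Finset (PGPoint F) := Finset.univ.filter (fun P : PGPoint F => P.1 ≤ W) with ht
  have hmap : ∀ v ∈ s, g v ∈ t := by
    intro v hv
    simp only [hs, Finset.mem_filter, Finset.mem_univ, true_and] at hv
    simp only [ht, Finset.mem_filter, Finset.mem_univ, true_and, hg, dif_neg hv.2]
    exact Submodule.span_le.mpr (Set.singleton_subset_iff.mpr hv.1)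
  have hsum := Finset.card_eq_sum_card_fiberwise hmap
  -- cardinality of the nonzero part of a submodule
  have hcardW : ∀ U : Submodule F (Fin 5 → F),
      (Finset.univ.filter fun v => v ∈ U ∧ v ≠ 0).card = q ^ Module.finrank F U - 1 := by
    intro U
    have h1 : (Finset.univ.filter fun v => v ∈ U ∧ v ≠ 0)
        = (Finset.univ.filter fun v => v ∈ U).erase 0 := by
      ext v
      simp [Finset.mem_erase, and_comm]
    have h2 : (Finset.univ.filter fun v : Fin 5 → F => v ∈ U).card = q ^ Module.finrank F U := by
      rw [← natCard_submodule U, Nat.card_eq_fintype_card, Fintype.card_subtype]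
    rw [h1, Finset.card_erase_of_mem, h2]
    simp [Submodule.zero_mem]
  -- each fiber has `q - 1` elements
  have hfiber : ∀ P ∈ t, (s.filter fun v => g v = P).card = q - 1 := by
    intro P hP
    simp only [ht, Finset.mem_filter, Finset.mem_univ, true_and] at hP
    have hfe : (s.filter fun v => g v = P) = Finset.univ.filter fun v => v ∈ P.1 ∧ v ≠ 0 := by
      ext v
      simp only [hs, Finset.filter_filter, Finset.mem_filter, Finset.mem_univ, true_and]
      constructor
      · rintro ⟨⟨hvW, hv0'⟩, hgv⟩
        refine ⟨?_, hv0'⟩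
        rw [← hgv]
        simp only [hg, dif_neg hv0']
        exact Submodule.mem_span_singleton_self v
      · rintro ⟨hvP, hv0'⟩
        have hle : Submodule.span F {v} ≤ P.1 :=
          Submodule.span_le.mpr (Set.singleton_subset_iff.mpr hvP)
        have heq : Submodule.span F {v} = P.1 :=
          Submodule.eq_of_le_of_finrank_eq hle (by rw [finrank_span_singleton hv0', P.2])
        refine ⟨⟨hP (heq ▸ Submodule.mem_span_singleton_self v), hv0'⟩, ?_⟩
        simp only [hg, dif_neg hv0']
        exact Subtype.ext heq
    rw [hfe]
    have := hcardW P.1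
    rwa [P.2, pow_one] at this
  rw [Finset.sum_congr rfl hfiber, Finset.sum_const, smul_eq_mul] at hsum
  rw [← hsum, hs]
  exact hcardW W

open scoped Classical in
/-- Points in a solid: `q^3+q^2+q+1`. -/
lemma card_points_of_finrank (W : Submodule F (Fin 5 → F)) {q d c : ℕ}
    (hcard : Fintype.card F = q) (hW : Module.finrank F W = d)
    (hc : c * (q - 1) + 1 = q ^ d) :
    (Finset.univ.filter fun P : PGPoint F => P.1 ≤ W).card = c := by
  classical
  have hq2 : 2 ≤ q := hcard ▸ Fintype.one_lt_card
  have h := card_points_le (F := F) W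
  rw [hcard, hW] at h
  have hpos : 1 ≤ q ^ d := Nat.one_le_pow _ _ (by omega)
  have h1 : (Finset.univ.filter fun P : PGPoint F => P.1 ≤ W).card * (q - 1) + 1 = q ^ d := by
    omega
  have := h1.trans hc.symm
  have h3 : (Finset.univ.filter fun P : PGPoint F => P.1 ≤ W).card * (q - 1) = c * (q - 1) := by
    omega
  exact Nat.eq_of_mul_eq_mul_right (by omega) h3

/-- Two distinct solids meet in a plane. -/
lemma finrank_inf_solids (S T : PGSolid F) (hST : S ≠ T) :
    Module.finrank F ↥(S.1 ⊓ T.1) = 3 := by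
  have h5 : Module.finrank F (Fin 5 → F) = 5 := by
    simp [Module.finrank_pi]
  have hle : Module.finrank F ↥(S.1 ⊔ T.1) ≤ 5 := by
    have := Submodule.finrank_le (S.1 ⊔ T.1)
    omega
  have hsup : Module.finrank F ↥(S.1 ⊔ T.1) = 5 := by
    by_contra hne5
    have hlt : Module.finrank F ↥(S.1 ⊔ T.1) ≤ 4 := by omega
    have hS : S.1 = S.1 ⊔ T.1 :=
      Submodule.eq_of_le_of_finrank_le le_sup_left (by rw [S.2]; exact hlt)
    have hTS : T.1 ≤ S.1 := hS ▸ le_sup_right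
    have : T.1 = S.1 := Submodule.eq_of_le_of_finrank_eq hTS (T.2.trans S.2.symm)
    exact hST (Subtype.ext this.symm)
  have := Submodule.finrank_sup_add_finrank_inf_eq S.1 T.1
  rw [hsup, S.2, T.2] at this
  omega

end Aux

private lemma quad_aux (k : ℕ) : (2 * k) * (2 * k - 2) = 4 * (k * (k - 1)) := by
  cases k with
  | zero => rfl
  | succ j =>
    have : 2 * (j + 1) - 2 = 2 * j := by omega
    rw [this]
    simp only [Nat.add_sub_cancel]
    ring

set_option maxHeartbeats 1000000

theorem stmt1 (q : ℕ) (hq : ∃ n : ℕ, 0 < n ∧ q = 2 ^ n)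
    (F : Type*) [Field F] [Fintype F] (hcard : Fintype.card F = q)
    (H : Set (PGSolid F)) (hne : H.Nonempty) (hI : CondI q H)
    (h : ℕ) (hh : h = H.ncard / (q ^ 2 / 2)) :
    (h % q = 0 ∨ h % q = 1) ∧ ((q : ℤ) + 1) ∣ (h : ℤ) * ((h : ℤ) - 2) := by
  classical
  obtain ⟨n, hn, hqn⟩ := hq
  have hq2 : 2 ≤ q := by
    rw [hqn]
    calc 2 = 2 ^ 1 := by norm_num
    _ ≤ 2 ^ n := Nat.pow_le_pow_right (by norm_num) hn
  set HF : Finset (PGSolid F) := (Set.toFinite H).toFinset with hHFdef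
  have hHF : ∀ S, S ∈ HF ↔ S ∈ H := fun S => Set.Finite.mem_toFinset _
  set m : ℕ := HF.card with hm
  have hmH : H.ncard = m := by
    rw [hm, ← Set.ncard_coe_finset]
    congr 1
    ext S
    simp [hHF]
  set K : PGPoint F → ℕ := fun P => (HF.filter fun S => P.1 ≤ S.1).card with hKdef
  have hK : ∀ P, (solidsThrough H P).ncard = K P := by
    intro P
    rw [hKdef]
    simp only
    rw [← Set.ncard_coe_finset]
    congr 1
    ext S
    simp [solidsThrough, hHF, and_comm]
  -- number of points per solid
  have hc1 : (q ^ 3 + q ^ 2 + q + 1) * (q - 1) + 1 = q ^ 4 := by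
    obtain ⟨p, hp⟩ : ∃ p, q = p + 1 := ⟨q - 1, by omega⟩
    subst hp
    simp only [Nat.add_sub_cancel]
    ring
  have hc2 : (q ^ 2 + q + 1) * (q - 1) + 1 = q ^ 3 := by
    obtain ⟨p, hp⟩ : ∃ p, q = p + 1 := ⟨q - 1, by omega⟩
    subst hp
    simp only [Nat.add_sub_cancel]
    ring
  have hptsS : ∀ S ∈ HF, (Finset.univ.filter fun P : PGPoint F => P.1 ≤ S.1).card
      = q ^ 3 + q ^ 2 + q + 1 := fun S _ => card_points_of_finrank S.1 hcard S.2 hc1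
  -- first double counting
  have D1 : m * (q ^ 3 + q ^ 2 + q + 1) = ∑ P : PGPoint F, K P := by
    calc m * (q ^ 3 + q ^ 2 + q + 1) = ∑ S ∈ HF, (q ^ 3 + q ^ 2 + q + 1) := by
          rw [Finset.sum_const, smul_eq_mul]
      _ = ∑ S ∈ HF, (Finset.univ.filter fun P : PGPoint F => P.1 ≤ S.1).card :=
          (Finset.sum_congr rfl hptsS).symm
      _ = ∑ S ∈ HF, ∑ P : PGPoint F, if P.1 ≤ S.1 then 1 else 0 :=
          Finset.sum_congr rfl fun S _ => Finset.card_filter _ _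
      _ = ∑ P : PGPoint F, ∑ S ∈ HF, if P.1 ≤ S.1 then 1 else 0 := Finset.sum_comm
      _ = ∑ P : PGPoint F, K P :=
          Finset.sum_congr rfl fun P _ => (Finset.card_filter _ _).symm
  -- second double counting
  have D2 : m * (m - 1) * (q ^ 2 + q + 1) = ∑ P : PGPoint F, K P * (K P - 1) := by
    have hpair : ∀ S ∈ HF, ∀ T ∈ HF.erase S,
        (Finset.univ.filter fun P : PGPoint F => P.1 ≤ S.1 ∧ P.1 ≤ T.1).card
          = q ^ 2 + q + 1 := by
      intro S hS T hT
      have hTS : T ≠ S := (Finset.mem_erase.mp hT).1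
      have heq : (Finset.univ.filter fun P : PGPoint F => P.1 ≤ S.1 ∧ P.1 ≤ T.1)
          = Finset.univ.filter fun P : PGPoint F => P.1 ≤ S.1 ⊓ T.1 := by
        ext P; simp [le_inf_iff]
      rw [heq]
      exact card_points_of_finrank _ hcard (finrank_inf_solids S T (Ne.symm hTS)) hc2
    have hconst : ∀ S ∈ HF, (∑ T ∈ HF.erase S, (q ^ 2 + q + 1)) = (m - 1) * (q ^ 2 + q + 1) := by
      intro S hS
      rw [Finset.sum_const, smul_eq_mul, Finset.card_erase_of_mem hS, ← hm]
    calc m * (m - 1) * (q ^ 2 + q + 1)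
        = ∑ S ∈ HF, ∑ T ∈ HF.erase S, (q ^ 2 + q + 1) := by
          refine Eq.symm ?_
          rw [Finset.sum_congr rfl hconst, Finset.sum_const, smul_eq_mul, ← hm]
          ring
      _ = ∑ S ∈ HF, ∑ T ∈ HF.erase S,
            (Finset.univ.filter fun P : PGPoint F => P.1 ≤ S.1 ∧ P.1 ≤ T.1).card := by
          refine Finset.sum_congr rfl fun S hS => Finset.sum_congr rfl fun T hT => ?_
          exact (hpair S hS T hT).symm
      _ = ∑ S ∈ HF, ∑ T ∈ HF.erase S, ∑ P : PGPoint F,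
            if P.1 ≤ S.1 ∧ P.1 ≤ T.1 then 1 else 0 :=
          Finset.sum_congr rfl fun S _ => Finset.sum_congr rfl fun T _ =>
            Finset.card_filter _ _
      _ = ∑ P : PGPoint F, ∑ S ∈ HF, ∑ T ∈ HF.erase S,
            if P.1 ≤ S.1 ∧ P.1 ≤ T.1 then 1 else 0 := by
          rw [Finset.sum_comm]
          refine Finset.sum_congr rfl fun S _ => Finset.sum_comm
      _ = ∑ P : PGPoint F, K P * (K P - 1) := by
          refine Finset.sum_congr rfl fun P _ => ?_
          have step1 : ∀ S ∈ HF, (∑ T ∈ HF.erase S, if P.1 ≤ S.1 ∧ P.1 ≤ T.1 then 1 else 0)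
              = if P.1 ≤ S.1 then ((HF.filter fun T => P.1 ≤ T.1).erase S).card else 0 := by
            intro S hS
            by_cases hPS : P.1 ≤ S.1
            · simp only [hPS, true_and, if_true]
              rw [← Finset.filter_erase, Finset.card_filter]
            · simp [hPS]
          rw [Finset.sum_congr rfl step1, ← Finset.sum_filter]
          have : ∀ S ∈ (HF.filter fun S => P.1 ≤ S.1),
              ((HF.filter fun T => P.1 ≤ T.1).erase S).card = K P - 1 := by
            intro S hS
            rw [Finset.card_erase_of_mem hS]
          rw [Finset.sum_congr rfl this, Finset.sum_const, smul_eq_mul]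
  -- partition the points into red, white, black
  set Rf : Finset (PGPoint F) := Finset.univ.filter fun P => K P = 0 with hRf
  set Wf : Finset (PGPoint F) := Finset.univ.filter fun P => ¬K P = 0 ∧ 2 * K P = q ^ 3
    with hWf
  set Bf : Finset (PGPoint F) := Finset.univ.filter fun P => ¬K P = 0 ∧ ¬2 * K P = q ^ 3
    with hBf
  have hsplit : ∀ f : PGPoint F → ℕ,
      ∑ P : PGPoint F, f P = ∑ P ∈ Rf, f P + (∑ P ∈ Wf, f P + ∑ P ∈ Bf, f P) := by
    intro f
    rw [← Finset.sum_filter_add_sum_filter_not Finset.univ (fun P => K P = 0) f]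
    congr 1
    rw [← Finset.sum_filter_add_sum_filter_not
      (Finset.univ.filter fun P => ¬K P = 0) (fun P => 2 * K P = q ^ 3) f,
      Finset.filter_filter, Finset.filter_filter]
  set w : ℕ := Wf.card with hw
  set b : ℕ := Bf.card with hb
  have hBval : ∀ P ∈ Bf, 2 * K P = q ^ 3 + q ^ 2 := by
    intro P hP
    simp only [hBf, Finset.mem_filter, Finset.mem_univ, true_and] at hP
    rcases hI P with h0 | h1 | h2
    · exact absurd (by rw [hK] at h0; exact h0) hP.1
    · exact absurd (by rw [hK] at h1; exact h1) hP.2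
    · rw [hK] at h2; exact h2
  have hWval : ∀ P ∈ Wf, 2 * K P = q ^ 3 := by
    intro P hP
    simp only [hWf, Finset.mem_filter, Finset.mem_univ, true_and] at hP
    exact hP.2
  have hRval : ∀ P ∈ Rf, K P = 0 := by
    intro P hP
    simp only [hRf, Finset.mem_filter, Finset.mem_univ, true_and] at hP
    exact hP
  -- the two fundamental equations
  have S1 : 2 * (m * (q ^ 3 + q ^ 2 + q + 1)) = w * q ^ 3 + b * (q ^ 3 + q ^ 2) := by
    have e0 : ∑ P ∈ Rf, 2 * K P = 0 := Finset.sum_eq_zero fun P hP => by simp [hRval P hP]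
    have e1 : ∑ P ∈ Wf, 2 * K P = w * q ^ 3 :=
      (Finset.sum_congr rfl fun P hP => hWval P hP).trans
        (by rw [Finset.sum_const, smul_eq_mul, ← hw])
    have e2 : ∑ P ∈ Bf, 2 * K P = b * (q ^ 3 + q ^ 2) :=
      (Finset.sum_congr rfl fun P hP => hBval P hP).trans
        (by rw [Finset.sum_const, smul_eq_mul, ← hb])
    rw [D1, Finset.mul_sum, hsplit fun P => 2 * K P, e0, e1, e2, zero_add]
  have S2 : 4 * (m * (m - 1) * (q ^ 2 + q + 1))
      = w * (q ^ 3 * (q ^ 3 - 2)) + b * ((q ^ 3 + q ^ 2) * (q ^ 3 + q ^ 2 - 2)) := by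
    have e0 : ∑ P ∈ Rf, (2 * K P) * (2 * K P - 2) = 0 :=
      Finset.sum_eq_zero fun P hP => by simp [hRval P hP]
    have e1 : ∑ P ∈ Wf, (2 * K P) * (2 * K P - 2) = w * (q ^ 3 * (q ^ 3 - 2)) :=
      (Finset.sum_congr rfl fun P hP => by rw [hWval P hP]).trans
        (by rw [Finset.sum_const, smul_eq_mul, ← hw])
    have e2 : ∑ P ∈ Bf, (2 * K P) * (2 * K P - 2)
        = b * ((q ^ 3 + q ^ 2) * (q ^ 3 + q ^ 2 - 2)) :=
      (Finset.sum_congr rfl fun P hP => by rw [hBval P hP]).trans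
        (by rw [Finset.sum_const, smul_eq_mul, ← hb])
    rw [D2, Finset.mul_sum]
    have hq4 : ∀ P : PGPoint F, 4 * (K P * (K P - 1)) = (2 * K P) * (2 * K P - 2) :=
      fun P => (quad_aux (K P)).symm
    rw [Finset.sum_congr rfl fun P _ => hq4 P,
      hsplit fun P => (2 * K P) * (2 * K P - 2), e0, e1, e2, zero_add]
  -- q^2 divides 2m
  have hodd : Odd (q ^ 3 + q ^ 2 + q + 1) := by
    have : Even q := by rw [hqn]; exact (Nat.even_pow' (by omega)).mpr even_two
    rcases this with ⟨r, hr⟩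
    exact ⟨(2 * r) ^ 3 / 2 + (2 * r) ^ 2 / 2 + r, by subst hr; ring_nf; omega⟩
  have hcop : Nat.Coprime (q ^ 2) (q ^ 3 + q ^ 2 + q + 1) := by
    have h2 : Nat.Coprime 2 (q ^ 3 + q ^ 2 + q + 1) := Nat.coprime_two_left.mpr hodd
    have hq2n : q ^ 2 = 2 ^ (2 * n) := by rw [hqn, ← pow_mul, mul_comm]
    have hc2 : Nat.Coprime (2 ^ (2 * n)) (q ^ 3 + q ^ 2 + q + 1) :=
      Nat.Coprime.pow_left _ h2
    rwa [← hq2n] at hc2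
  have hdvd2m : q ^ 2 ∣ 2 * m := by
    have : q ^ 2 ∣ (2 * m) * (q ^ 3 + q ^ 2 + q + 1) := by
      have : (2 * m) * (q ^ 3 + q ^ 2 + q + 1)
          = q ^ 2 * (w * q + b * (q + 1)) := by rw [mul_assoc 2 m, S1]; ring
      exact ⟨_, this⟩
    exact (Nat.Coprime.dvd_of_dvd_mul_right hcop) this
  obtain ⟨h', hh'⟩ := hdvd2m
  -- identify h with h'
  have hqeven : 2 * (q ^ 2 / 2) = q ^ 2 := by
    have : q % 2 = 0 := by
      rw [hqn]
      rcases n with _ | n'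
      · omega
      · simp [pow_succ, Nat.mul_mod_left]
    have : q ^ 2 % 2 = 0 := by
      rcases Nat.dvd_of_mod_eq_zero this with ⟨r, hr⟩
      subst hr
      ring_nf
      omega
    omega
  have hhh' : h = h' := by
    rw [hh, hmH]
    have hmh : m = (q ^ 2 / 2) * h' := by
      have h2 : 2 * m = 2 * ((q ^ 2 / 2) * h') := by
        rw [← mul_assoc, hqeven, ← hh']
      omega
    have hqq : 4 ≤ q ^ 2 := by
      calc 4 = 2 ^ 2 := by norm_num
      _ ≤ q ^ 2 := Nat.pow_le_pow_left hq2 2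
    rw [hmh, Nat.mul_div_cancel_left _ (by omega : 0 < q ^ 2 / 2)]
  subst hhh'
  -- move to the integers
  have hm1 : 1 ≤ m := by
    rw [hm, hHFdef]
    obtain ⟨S, hS⟩ := hne
    exact Finset.card_pos.mpr ⟨S, (Set.Finite.mem_toFinset _).mpr hS⟩
  have hq3 : (2 : ℕ) ≤ q ^ 3 := le_trans hq2 (Nat.le_self_pow (by omega) q)
  have hZ1 : (2 : ℤ) * (m * (q ^ 3 + q ^ 2 + q + 1))
      = w * q ^ 3 + b * (q ^ 3 + q ^ 2) := by exact_mod_cast S1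
  have hq32 : (2 : ℕ) ≤ q ^ 3 + q ^ 2 := le_trans hq3 (Nat.le_add_right _ _)
  have hZ2 : (4 : ℤ) * ((m : ℤ) * ((m : ℤ) - 1) * ((q : ℤ) ^ 2 + q + 1))
      = (w : ℤ) * ((q : ℤ) ^ 3 * ((q : ℤ) ^ 3 - 2))
        + (b : ℤ) * (((q : ℤ) ^ 3 + (q : ℤ) ^ 2) * ((q : ℤ) ^ 3 + (q : ℤ) ^ 2 - 2)) := by
    have hc := congrArg (Nat.cast : ℕ → ℤ) S2
    push_cast [Nat.cast_sub hm1, Nat.cast_sub hq3, Nat.cast_sub hq32] at hc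
    linear_combination hc
  have hZm : (2 : ℤ) * m = (q : ℤ) ^ 2 * h := by exact_mod_cast hh'
  have hq0 : (q : ℤ) ^ 2 ≠ 0 := by positivity
  -- first cancelled equation
  have E1 : (q : ℤ) * w + ((q : ℤ) + 1) * b = (h : ℤ) * ((q : ℤ) ^ 3 + q ^ 2 + q + 1) := by
    refine mul_left_cancel₀ hq0 ?_
    linear_combination ((q : ℤ) ^ 3 + q ^ 2 + q + 1) * hZm - hZ1
  -- second cancelled equation
  have E2 : (w : ℤ) * (q * ((q : ℤ) ^ 3 - 2)) + (b : ℤ) * (((q : ℤ) + 1) * ((q : ℤ) ^ 3 + q ^ 2 - 2))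
      = (h : ℤ) * ((q : ℤ) ^ 2 * h - 2) * ((q : ℤ) ^ 2 + q + 1) := by
    refine mul_left_cancel₀ hq0 ?_
    linear_combination ((q : ℤ) ^ 2 + q + 1) * (2 * (m : ℤ) + (q : ℤ) ^ 2 * h - 2) * hZm - hZ2
  -- third equation
  have E3 : (q : ℤ) ^ 2 * w + ((q : ℤ) + 1) ^ 2 * b
      = (h : ℤ) ^ 2 * ((q : ℤ) ^ 2 + q + 1) + 2 * q * h := by
    refine mul_left_cancel₀ hq0 ?_
    linear_combination E2 + 2 * E1
  -- the two divisibility conclusions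
  have hqw : (q : ℤ) * w = ((q : ℤ) + 1) * ((h : ℤ) * ((q : ℤ) ^ 3 + q ^ 2 + q + 1))
      - ((h : ℤ) ^ 2 * ((q : ℤ) ^ 2 + q + 1) + 2 * q * h) := by
    linear_combination ((q : ℤ) + 1) * E1 - E3
  have hbb : ((q : ℤ) + 1) * b = (h : ℤ) ^ 2 * ((q : ℤ) ^ 2 + q + 1) + 2 * q * h
      - (q : ℤ) * h * ((q : ℤ) ^ 3 + q ^ 2 + q + 1) := by
    linear_combination E3 - (q : ℤ) * E1
  have hdvd_q : (q : ℤ) ∣ (h : ℤ) ^ 2 - h :=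
    ⟨(h : ℤ) * ((q : ℤ) ^ 3 + 2 * q ^ 2 + 2 * q) - (h : ℤ) ^ 2 * ((q : ℤ) + 1) - w, by
      linear_combination hqw⟩
  have hdvd_q1 : ((q : ℤ) + 1) ∣ (h : ℤ) * ((h : ℤ) - 2) :=
    ⟨(b : ℤ) + ((q : ℤ) * h * ((q : ℤ) ^ 2 + 1) - (q : ℤ) * h ^ 2 - 2 * h), by
      linear_combination -hbb⟩
  refine ⟨?_, hdvd_q1⟩
  -- from q ∣ h^2 - h conclude h % q = 0 or 1
  rcases Nat.eq_zero_or_pos h with h0 | hpos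
  · left; simp [h0]
  have hdvdN : q ∣ h * (h - 1) := by
    have : ((h * (h - 1) : ℕ) : ℤ) = (h : ℤ) ^ 2 - h := by
      push_cast [Nat.cast_sub hpos]; ring
    exact_mod_cast this ▸ hdvd_q
  rcases Nat.even_or_odd h with he | ho
  · left
    have hodd1 : Odd (h - 1) := by
      rcases he with ⟨r, hr⟩
      exact ⟨r - 1, by omega⟩
    have hcop1 : Nat.Coprime q (h - 1) := by
      rw [hqn]
      exact Nat.Coprime.pow_left _ (Nat.coprime_two_left.mpr hodd1)
    have : q ∣ h := (Nat.Coprime.dvd_of_dvd_mul_right hcop1) hdvdN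
    obtain ⟨t, ht⟩ := this
    rw [ht]
    exact Nat.mul_mod_right q t
  · right
    have hcop1 : Nat.Coprime q h := by
      rw [hqn]
      exact Nat.Coprime.pow_left _ (Nat.coprime_two_left.mpr ho)
    have hdvdh1 : q ∣ h - 1 := by
      have := Nat.Coprime.dvd_of_dvd_mul_left hcop1 hdvdN
      exact this
    obtain ⟨t, ht⟩ := hdvdh1
    have hht : h = q * t + 1 := by omega
    rw [hht, Nat.mul_add_mod]
    exact Nat.mod_eq_of_lt (by omega)
end

section
/- Under hypothesis (I), every solid of PG(4,q) (q even) containing the unique red point contains exactly q^2+q+1 black points. -/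
open Submodule Set
open Module
open scoped Classical

variable {F : Type*} [Field F]

/-! ### Auxiliary development -/

def whiteIn (q : ℕ) (H : Set (PGSolid F)) (W : Submodule F (Fin 5 → F)) : Set (PGPoint F) :=
  {P : PGPoint F | White q H P ∧ P.1 ≤ W}

section Pure
variable {F : Type*} [Field F]

lemma finrank_V : Module.finrank F (Fin 5 → F) = 5 := Module.finrank_fin_fun F

lemma finrank_le5 (W : Submodule F (Fin 5 → F)) : Module.finrank F W ≤ 5 := by
  have := Submodule.finrank_le W
  rwa [finrank_V] at this

noncomputable def somePoint (F : Type*) [Field F] : PGPoint F :=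
  ⟨Submodule.span F {Pi.single (0 : Fin 5) (1:F)}, finrank_span_singleton (by
    intro h; have := congrFun h 0; simp at this)⟩

noncomputable def somePoint2 (F : Type*) [Field F] : PGPoint F :=
  ⟨Submodule.span F {Pi.single (1 : Fin 5) (1:F)}, finrank_span_singleton (by
    intro h; have := congrFun h 1; simp at this)⟩

/-- the span of two distinct points is a line -/
lemma rank_sup_point (R P : PGPoint F) (hne : R ≠ P) :
    Module.finrank F ↥(R.1 ⊔ P.1) = 2 := by
  have h := Submodule.finrank_sup_add_finrank_inf_eq R.1 P.1
  rw [R.2, P.2] at h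
  have hlt : R.1 ⊓ P.1 < R.1 := by
    refine lt_of_le_of_ne inf_le_left (fun he => hne ?_)
    have hRP : R.1 ≤ P.1 := he ▸ inf_le_right
    exact Subtype.ext (Submodule.eq_of_le_of_finrank_eq hRP (by rw [R.2, P.2]))
  have h0 : Module.finrank F ↥(R.1 ⊓ P.1) = 0 := by
    have := Submodule.finrank_lt_finrank_of_lt hlt
    rw [R.2] at this; omega
  omega

noncomputable def someLine (F : Type*) [Field F] : PGLine F :=
  ⟨(somePoint F).1 ⊔ (somePoint2 F).1, rank_sup_point _ _ (by
    intro h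
    have h1 : Pi.single (0 : Fin 5) (1:F) ∈ (somePoint2 F).1 := by
      rw [← h]; exact Submodule.mem_span_singleton_self _
    rw [somePoint2, Submodule.mem_span_singleton] at h1
    obtain ⟨c, hc⟩ := h1
    have := congrFun hc 0
    simp at this)⟩

/-- a subspace not inside a solid spans everything with it -/
lemma sup_solid_eq_top (W : Submodule F (Fin 5 → F)) (S : PGSolid F) (h : ¬ W ≤ S.1) :
    W ⊔ S.1 = ⊤ := by
  have hlt : S.1 < W ⊔ S.1 := by
    refine lt_of_le_of_ne le_sup_right (fun he => h ?_)
    rw [he]; exact le_sup_left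
  have h5 : Module.finrank F ↥(W ⊔ S.1) = 5 := by
    have h1 := Submodule.finrank_lt_finrank_of_lt hlt
    have h2 := finrank_le5 (W ⊔ S.1)
    rw [S.2] at h1; omega
  apply Submodule.eq_of_le_of_finrank_eq le_top
  rw [h5, finrank_top, finrank_V]

lemma inf_line_solid (L : PGLine F) (S : PGSolid F) (h : ¬ L.1 ≤ S.1) :
    Module.finrank F ↥(L.1 ⊓ S.1) = 1 := by
  have h1 := Submodule.finrank_sup_add_finrank_inf_eq L.1 S.1
  rw [L.2, S.2, sup_solid_eq_top L.1 S h, finrank_top, finrank_V] at h1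
  omega

lemma inf_solid_solid (S S' : PGSolid F) (h : S ≠ S') :
    Module.finrank F ↥(S.1 ⊓ S'.1) = 3 := by
  have hne : ¬ S.1 ≤ S'.1 := by
    intro hle
    exact h (Subtype.ext (Submodule.eq_of_le_of_finrank_eq hle (by rw [S.2, S'.2])))
  have h1 := Submodule.finrank_sup_add_finrank_inf_eq S.1 S'.1
  rw [S.2, S'.2, sup_solid_eq_top S.1 S' hne, finrank_top, finrank_V] at h1
  omega


end Pure

section Aux
variable {F : Type*} [Field F] [Fintype F]

lemma mem_toFinset_any {α : Type*} {s : Set α} {inst : Fintype s} {a : α} :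
    a ∈ @Set.toFinset α s inst ↔ a ∈ s := Set.mem_toFinset

instance : Finite (Submodule F (Fin 5 → F)) :=
  Finite.of_injective (fun W => (W : Set (Fin 5 → F))) SetLike.coe_injective

noncomputable instance : Fintype (Submodule F (Fin 5 → F)) := Fintype.ofFinite _

/-- the points inside a subspace -/
def ptsIn (W : Submodule F (Fin 5 → F)) : Set (PGPoint F) := {P | P.1 ≤ W}

lemma ptsIn_ncard_mul (W : Submodule F (Fin 5 → F)) :
    (ptsIn W).ncard * (Fintype.card F - 1) = Fintype.card F ^ (Module.finrank F W) - 1 := by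
  classical
  set q := Fintype.card F with hq
  set f : W → PGPoint F := fun v =>
    if h : (v : Fin 5 → F) ≠ 0 then ⟨Submodule.span F {(v : Fin 5 → F)}, finrank_span_singleton h⟩
    else somePoint F with hf
  have hmem : ∀ v ∈ Finset.univ.filter (fun v : W => v ≠ 0), f v ∈ (ptsIn W).toFinset := by
    intro v hv
    simp only [Finset.mem_filter] at hv
    have hv0 : (v : Fin 5 → F) ≠ 0 := fun h => hv.2 (Subtype.ext h)
    simp only [Finset.mem_filter, mem_toFinset_any]
    simp only [hf, dif_pos hv0, mem_toFinset_any, ptsIn, Set.mem_setOf_eq]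
    exact Submodule.span_le.mpr (by simp)
  have key := Finset.card_eq_sum_card_fiberwise hmem
  have hcardW : (Finset.univ.filter (fun v : W => v ≠ 0)).card = q ^ (finrank F W) - 1 := by
    rw [Finset.filter_ne' Finset.univ (0 : W), Finset.card_erase_of_mem (Finset.mem_univ _),
      Finset.card_univ, card_eq_pow_finrank (K := F) (V := W)]
  have hfiber : ∀ P ∈ (ptsIn W).toFinset,
      ((Finset.univ.filter (fun v : W => v ≠ 0)).filter (fun v => f v = P)).card = q - 1 := by
    intro P hP
    rw [Set.mem_toFinset] at hP
    have hPW : P.1 ≤ W := hP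
    rw [show q - 1 = (Finset.univ.filter (fun u : P.1 => u ≠ 0)).card by
      rw [Finset.filter_ne' Finset.univ (0 : P.1), Finset.card_erase_of_mem (Finset.mem_univ _),
        Finset.card_univ, card_eq_pow_finrank (K := F) (V := P.1), P.2, pow_one]]
    have hsub : ∀ v ∈ (Finset.univ.filter (fun v : W => v ≠ 0)).filter (fun v => f v = P),
        (v : Fin 5 → F) ∈ P.1 := by
      intro v hv
      simp only [Finset.mem_filter, Finset.mem_univ, true_and] at hv
      obtain ⟨hv0, hfv⟩ := hv
      have hv0' : (v : Fin 5 → F) ≠ 0 := fun h => hv0 (Subtype.ext h)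
      rw [hf] at hfv
      simp only [dif_pos hv0'] at hfv
      rw [← congrArg Subtype.val hfv]
      exact Submodule.mem_span_singleton_self _
    refine Finset.card_bij (fun v hv => (⟨(v : Fin 5 → F), hsub v hv⟩ : P.1)) ?_ ?_ ?_
    · intro v hv
      simp only [Finset.mem_filter, Finset.mem_univ, true_and] at hv ⊢
      intro h
      have : (v : Fin 5 → F) = 0 := congrArg Subtype.val h
      exact hv.1 (Subtype.ext this)
    · intro v hv v' hv' h
      simp only [Subtype.mk.injEq] at h
      exact Subtype.ext h
    · intro u hu
      simp only [Finset.mem_filter, Finset.mem_univ, true_and] at hu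
      have huW : (u : Fin 5 → F) ∈ W := hPW u.2
      have hu0 : (u : Fin 5 → F) ≠ 0 := fun h => hu (Subtype.ext h)
      refine ⟨⟨(u : Fin 5 → F), huW⟩, ?_, rfl⟩
      simp only [Finset.mem_filter, Finset.mem_univ, true_and]
      constructor
      · intro h
        exact hu0 (congrArg Subtype.val h)
      · rw [hf]
        simp only [dif_pos hu0]
        apply Subtype.ext
        apply Submodule.eq_of_le_of_finrank_eq
        · exact Submodule.span_le.mpr (by simp)
        · rw [finrank_span_singleton hu0, P.2]
  calc (ptsIn W).ncard * (q - 1) = ∑ _P ∈ (ptsIn W).toFinset, (q-1) := by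
        rw [Finset.sum_const, Set.ncard_eq_toFinset_card', smul_eq_mul]
    _ = q ^ (finrank F W) - 1 := by
        rw [← hcardW, key]
        exact (Finset.sum_congr rfl hfiber).symm

lemma geom_aux (q : ℕ) (hq : 1 ≤ q) (d : ℕ) :
    (∑ i ∈ Finset.range d, q ^ i) * (q - 1) + 1 = q ^ d := by
  induction d with
  | zero => simp
  | succ n ih =>
    rw [Finset.sum_range_succ, add_mul, pow_succ]
    obtain ⟨k, rfl⟩ : ∃ k, q = k + 1 := ⟨q - 1, by omega⟩
    simp only [Nat.add_sub_cancel] at *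
    zify at ih ⊢
    linear_combination ih

lemma ptsIn_ncard (W : Submodule F (Fin 5 → F)) {d : ℕ} (hd : Module.finrank F W = d) :
    (ptsIn W).ncard = ∑ i ∈ Finset.range d, (Fintype.card F) ^ i := by
  have hq : 1 < Fintype.card F := Fintype.one_lt_card
  have h1 := ptsIn_ncard_mul W
  rw [hd] at h1
  have h2 := geom_aux (Fintype.card F) (by omega) d
  apply Nat.eq_of_mul_eq_mul_right (show 0 < Fintype.card F - 1 by omega)
  omega

/-! ### specific cardinalities -/

lemma ptsIn_line_ncard (L : PGLine F) : (ptsIn L.1).ncard = Fintype.card F + 1 := by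
  rw [ptsIn_ncard L.1 L.2]
  simp [Finset.sum_range_succ]
  ring

lemma ptsIn_plane_ncard (W : Submodule F (Fin 5 → F)) (h : Module.finrank F W = 3) :
    (ptsIn W).ncard = Fintype.card F ^ 2 + Fintype.card F + 1 := by
  rw [ptsIn_ncard W h]
  simp [Finset.sum_range_succ]
  ring

lemma ptsIn_solid_ncard (W : Submodule F (Fin 5 → F)) (h : Module.finrank F W = 4) :
    (ptsIn W).ncard = Fintype.card F ^ 3 + Fintype.card F ^ 2 + Fintype.card F + 1 := by
  rw [ptsIn_ncard W h]
  simp [Finset.sum_range_succ]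
  ring

lemma ptsIn_top_ncard :
    (ptsIn (⊤ : Submodule F (Fin 5 → F))).ncard
      = Fintype.card F ^ 4 + Fintype.card F ^ 3 + Fintype.card F ^ 2 + Fintype.card F + 1 := by
  rw [ptsIn_ncard (⊤ : Submodule F (Fin 5 → F)) (by rw [finrank_top, finrank_V])]
  simp [Finset.sum_range_succ]
  ring

/-! ### degrees -/

lemma deg_eq (H : Set (PGSolid F)) (P : PGPoint F) :
    (solidsThrough H P).ncard = (H.toFinset.filter (fun S' => P.1 ≤ S'.1)).card := by
  rw [Set.ncard_eq_toFinset_card']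
  congr 1
  ext S'
  simp only [Finset.mem_filter, mem_toFinset_any]
  simp [solidsThrough, mem_toFinset_any]

lemma red_not_le (H : Set (PGSolid F)) (R : PGPoint F) (hR : Red H R) {S' : PGSolid F}
    (hS' : S' ∈ H) : ¬ R.1 ≤ S'.1 := by
  intro hle
  rw [Red, Set.ncard_eq_zero (Set.toFinite _)] at hR
  have : S' ∈ solidsThrough H R := ⟨hS', hle⟩
  rw [hR] at this
  exact this

/-! ### the fundamental line count -/

lemma line_sum (H : Set (PGSolid F)) (R : PGPoint F) (hR : Red H R) (L : PGLine F)
    (hRL : R.1 ≤ L.1) :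
    ∑ P ∈ (ptsIn L.1).toFinset, (solidsThrough H P).ncard = H.ncard := by
  classical
  set g : PGSolid F → PGPoint F := fun S' =>
    if h : Module.finrank F ↥(L.1 ⊓ S'.1) = 1 then ⟨L.1 ⊓ S'.1, h⟩ else somePoint F with hg
  have hrank : ∀ S' ∈ H.toFinset, Module.finrank F ↥(L.1 ⊓ S'.1) = 1 := by
    intro S' hS'
    rw [Set.mem_toFinset] at hS'
    refine inf_line_solid L S' (fun hle => red_not_le H R hR hS' (le_trans hRL hle))
  have hmem : ∀ S' ∈ H.toFinset, g S' ∈ (ptsIn L.1).toFinset := by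
    intro S' hS'
    rw [hg]
    simp only [dif_pos (hrank S' hS')]
    rw [Set.mem_toFinset]
    simp only [ptsIn, Set.mem_setOf_eq]
    exact inf_le_left
  have key := Finset.card_eq_sum_card_fiberwise hmem
  rw [Set.ncard_eq_toFinset_card' H, key]
  refine Finset.sum_congr rfl (fun P hP => ?_)
  rw [Set.mem_toFinset] at hP
  rw [deg_eq]
  congr 1
  refine Finset.filter_congr (fun S' hS' => ?_)
  have h1 := hrank S' hS'
  rw [hg]
  simp only [dif_pos h1]
  constructor
  · intro hle
    exact Subtype.ext
      (Submodule.eq_of_le_of_finrank_eq (le_inf hP hle) (by rw [P.2, h1])).symm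
  · intro he
    rw [← congrArg Subtype.val he]
    exact inf_le_right

/-! ### splitting degree sums into colour classes -/

lemma not_white_red {q : ℕ} {H : Set (PGSolid F)} {P : PGPoint F} (hq : 0 < q)
    (hR : Red H P) : ¬ White q H P ∧ ¬ Black q H P := by
  rw [Red] at hR
  constructor
  · intro hw
    rw [White, hR, mul_zero] at hw
    exact absurd hw.symm (pow_pos hq 3).ne'
  · intro hb
    rw [Black, hR, mul_zero] at hb
    have h3 : 0 < q ^ 3 + q ^ 2 := by positivity
    omega

lemma class_sum (q : ℕ) (H : Set (PGSolid F)) (hI : CondI q H) (hq : 0 < q)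
    (U : Submodule F (Fin 5 → F)) :
    2 * ∑ P ∈ (ptsIn U).toFinset, (solidsThrough H P).ncard
      = q ^ 3 * (whiteIn q H U).ncard + (q ^ 3 + q ^ 2) * (blackIn q H U).ncard := by
  classical
  rw [Finset.mul_sum]
  rw [← Finset.sum_filter_add_sum_filter_not ((ptsIn U).toFinset) (fun P => Black q H P)]
  have h1 : (ptsIn U).toFinset.filter (fun P => Black q H P) = (blackIn q H U).toFinset := by
    ext P
    simp only [Finset.mem_filter, mem_toFinset_any]
    simp only [Finset.mem_filter, mem_toFinset_any, blackIn, Set.mem_setOf_eq, ptsIn]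
    tauto
  have h2 : ((ptsIn U).toFinset.filter (fun P => ¬ Black q H P)).filter
      (fun P => White q H P) = (whiteIn q H U).toFinset := by
    ext P
    simp only [Finset.mem_filter, mem_toFinset_any]
    simp only [Finset.mem_filter, mem_toFinset_any, whiteIn, Set.mem_setOf_eq, ptsIn]
    constructor
    · rintro ⟨⟨hPU, _⟩, hw⟩; exact ⟨hw, hPU⟩
    · rintro ⟨hw, hPU⟩
      refine ⟨⟨hPU, fun hb => ?_⟩, hw⟩
      rw [White] at hw
      rw [Black] at hb
      rw [hw] at hb
      have h4 : q ^ 3 + 0 = q ^ 3 + q ^ 2 := by simpa using hb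
      exact (pow_pos hq 2).ne' (Nat.add_left_cancel h4).symm
  have hblack : ∑ P ∈ (ptsIn U).toFinset.filter (fun P => Black q H P),
      2 * (solidsThrough H P).ncard = (q ^ 3 + q ^ 2) * (blackIn q H U).ncard := by
    have hc : ∀ P ∈ (ptsIn U).toFinset.filter (fun P => Black q H P),
        2 * (solidsThrough H P).ncard = q ^ 3 + q ^ 2 :=
      fun P hP => (Finset.mem_filter.mp hP).2
    rw [Finset.sum_congr rfl hc, h1, Finset.sum_const, smul_eq_mul,
      ← Set.ncard_eq_toFinset_card', mul_comm]
  rw [hblack]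
  rw [← Finset.sum_filter_add_sum_filter_not ((ptsIn U).toFinset.filter
    (fun P => ¬ Black q H P)) (fun P => White q H P)]
  have hwhite : ∑ P ∈ ((ptsIn U).toFinset.filter (fun P => ¬ Black q H P)).filter
      (fun P => White q H P), 2 * (solidsThrough H P).ncard
      = q ^ 3 * (whiteIn q H U).ncard := by
    have hc : ∀ P ∈ ((ptsIn U).toFinset.filter (fun P => ¬ Black q H P)).filter
        (fun P => White q H P), 2 * (solidsThrough H P).ncard = q ^ 3 :=
      fun P hP => (Finset.mem_filter.mp hP).2
    rw [Finset.sum_congr rfl hc, h2, Finset.sum_const, smul_eq_mul,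
      ← Set.ncard_eq_toFinset_card', mul_comm]
  have hzero : ∑ P ∈ ((ptsIn U).toFinset.filter (fun P => ¬ Black q H P)).filter
      (fun P => ¬ White q H P), 2 * (solidsThrough H P).ncard = 0 := by
    refine Finset.sum_eq_zero (fun P hP => ?_)
    simp only [Finset.mem_filter] at hP
    obtain ⟨⟨_, hnb⟩, hnw⟩ := hP
    rcases hI P with h | h | h
    · rw [h, mul_zero]
    · exact absurd h hnw
    · exact absurd h hnb
  rw [hwhite, hzero]
  ring

/-! ### the pencil of lines through R -/

def linesThrough (R : PGPoint F) (W : Submodule F (Fin 5 → F)) : Set (PGLine F) :=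
  {L | R.1 ≤ L.1 ∧ L.1 ≤ W}

lemma pencil (R : PGPoint F) {W : Submodule F (Fin 5 → F)} (hRW : R.1 ≤ W)
    (A : Set (PGPoint F)) (hAR : R ∉ A) (hAW : ∀ P ∈ A, P.1 ≤ W) :
    A.ncard = ∑ L ∈ (linesThrough R W).toFinset, (A ∩ ptsIn L.1).ncard := by
  classical
  set f : PGPoint F → PGLine F := fun P =>
    if h : R ≠ P then ⟨R.1 ⊔ P.1, rank_sup_point R P h⟩ else someLine F with hf
  have hmem : ∀ P ∈ A.toFinset, f P ∈ (linesThrough R W).toFinset := by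
    intro P hP
    rw [Set.mem_toFinset] at hP
    have hne : R ≠ P := fun he => hAR (he ▸ hP)
    rw [hf]
    simp only [dif_pos hne, Set.mem_toFinset]
    exact ⟨le_sup_left, sup_le hRW (hAW P hP)⟩
  have key := Finset.card_eq_sum_card_fiberwise hmem
  rw [Set.ncard_eq_toFinset_card', key]
  refine Finset.sum_congr rfl (fun L hL => ?_)
  rw [Set.mem_toFinset] at hL
  rw [Set.ncard_eq_toFinset_card']
  congr 1
  ext P
  simp only [Finset.mem_filter, mem_toFinset_any]
  simp only [Finset.mem_filter, mem_toFinset_any, Set.mem_inter_iff, ptsIn, Set.mem_setOf_eq]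
  constructor
  · rintro ⟨hPA, hfP⟩
    refine ⟨hPA, ?_⟩
    have hne : R ≠ P := fun he => hAR (he ▸ hPA)
    rw [hf] at hfP
    simp only [dif_pos hne] at hfP
    rw [← congrArg Subtype.val hfP]
    exact le_sup_right
  · rintro ⟨hPA, hPL⟩
    refine ⟨hPA, ?_⟩
    have hne : R ≠ P := fun he => hAR (he ▸ hPA)
    rw [hf]
    simp only [dif_pos hne]
    exact Subtype.ext
      (Submodule.eq_of_le_of_finrank_eq (sup_le hL.1 hPL) (by rw [rank_sup_point R P hne, L.2]))

lemma lines_card (R : PGPoint F) {W : Submodule F (Fin 5 → F)} (hRW : R.1 ≤ W) :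
    (linesThrough R W).ncard * Fintype.card F = (ptsIn W).ncard - 1 := by
  classical
  have hconst : ∀ L ∈ (linesThrough R W).toFinset,
      ((ptsIn W \ {R}) ∩ ptsIn L.1).ncard = Fintype.card F := by
    intro L hL
    rw [Set.mem_toFinset] at hL
    have hset : (ptsIn W \ {R}) ∩ ptsIn L.1 = ptsIn L.1 \ {R} := by
      ext P
      simp only [Set.mem_inter_iff, Set.mem_diff, Set.mem_singleton_iff, ptsIn,
        Set.mem_setOf_eq]
      exact ⟨fun h => ⟨h.2, h.1.2⟩, fun h => ⟨⟨le_trans h.1 hL.2, h.2⟩, h.1⟩⟩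
    rw [hset, Set.ncard_diff_singleton_of_mem (show R ∈ ptsIn L.1 from hL.1),
      ptsIn_line_ncard]
    simp
  calc (linesThrough R W).ncard * Fintype.card F
      = ∑ _L ∈ (linesThrough R W).toFinset, Fintype.card F := by
        rw [Finset.sum_const, smul_eq_mul, Set.ncard_eq_toFinset_card']
    _ = ∑ L ∈ (linesThrough R W).toFinset, ((ptsIn W \ {R}) ∩ ptsIn L.1).ncard :=
        (Finset.sum_congr rfl hconst).symm
    _ = (ptsIn W \ {R}).ncard :=
        (pencil R hRW (ptsIn W \ {R}) (by simp) (fun P hP => hP.1)).symm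
    _ = (ptsIn W).ncard - 1 :=
        Set.ncard_diff_singleton_of_mem (show R ∈ ptsIn W from hRW)

/-! ### solid sums -/

lemma solid_sum (H : Set (PGSolid F)) {S₀ : PGSolid F} (hS₀ : S₀ ∈ H) :
    ∑ P ∈ (ptsIn S₀.1).toFinset, (solidsThrough H P).ncard
      = (Fintype.card F ^ 3 + Fintype.card F ^ 2 + Fintype.card F + 1)
        + (H.ncard - 1) * (Fintype.card F ^ 2 + Fintype.card F + 1) := by
  classical
  set q := Fintype.card F
  have step1 : ∑ P ∈ (ptsIn S₀.1).toFinset, (solidsThrough H P).ncard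
      = ∑ S'' ∈ H.toFinset, (ptsIn (S₀.1 ⊓ S''.1)).ncard := by
    simp_rw [deg_eq, Finset.card_filter]
    rw [Finset.sum_comm]
    refine Finset.sum_congr rfl (fun S'' _ => ?_)
    rw [← Finset.card_filter, Set.ncard_eq_toFinset_card']
    congr 1
    ext P
    simp only [Finset.mem_filter, mem_toFinset_any]
    simp only [Finset.mem_filter, mem_toFinset_any, ptsIn, Set.mem_setOf_eq, le_inf_iff]
  rw [step1]
  have hmem : S₀ ∈ H.toFinset := Set.mem_toFinset.mpr hS₀
  rw [← Finset.sum_erase_add _ _ hmem]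
  have hdiag : (ptsIn (S₀.1 ⊓ S₀.1)).ncard = q ^ 3 + q ^ 2 + q + 1 := by
    rw [inf_idem]
    exact ptsIn_solid_ncard S₀.1 S₀.2
  have hoff : ∀ S'' ∈ H.toFinset.erase S₀,
      (ptsIn (S₀.1 ⊓ S''.1)).ncard = q ^ 2 + q + 1 := by
    intro S'' hS''
    have hne : S₀ ≠ S'' := (Finset.ne_of_mem_erase hS'').symm
    rw [ptsIn_plane_ncard _ (inf_solid_solid S₀ S'' hne)]
  rw [Finset.sum_congr rfl hoff, Finset.sum_const, smul_eq_mul, hdiag,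
    Finset.card_erase_of_mem hmem, Set.ncard_eq_toFinset_card' H]
  ring

lemma incidence (q : ℕ) (H : Set (PGSolid F)) :
    ∑ S₀ ∈ H.toFinset, (blackIn q H S₀.1).ncard
      = ∑ P ∈ (blackIn q H (⊤ : Submodule F (Fin 5 → F))).toFinset,
          (solidsThrough H P).ncard := by
  classical
  have h1 : ∀ S₀ : PGSolid F, (blackIn q H S₀.1).toFinset
      = (blackIn q H (⊤ : Submodule F (Fin 5 → F))).toFinset.filter
          (fun P => P.1 ≤ S₀.1) := by
    intro S₀
    ext P
    simp only [Finset.mem_filter, mem_toFinset_any]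
    simp only [Finset.mem_filter, mem_toFinset_any, blackIn, Set.mem_setOf_eq, le_top,
      and_true]
  calc ∑ S₀ ∈ H.toFinset, (blackIn q H S₀.1).ncard
      = ∑ S₀ ∈ H.toFinset, ∑ P ∈ (blackIn q H (⊤ : Submodule F (Fin 5 → F))).toFinset,
          (if P.1 ≤ S₀.1 then 1 else 0) := by
        refine Finset.sum_congr rfl (fun S₀ _ => ?_)
        rw [Set.ncard_eq_toFinset_card', h1, Finset.card_filter]
    _ = ∑ P ∈ (blackIn q H (⊤ : Submodule F (Fin 5 → F))).toFinset, ∑ S₀ ∈ H.toFinset,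
          (if P.1 ≤ S₀.1 then 1 else 0) := Finset.sum_comm
    _ = ∑ P ∈ (blackIn q H (⊤ : Submodule F (Fin 5 → F))).toFinset,
          (solidsThrough H P).ncard := by
        refine Finset.sum_congr rfl (fun P _ => ?_)
        rw [deg_eq, Finset.card_filter]

/-! ### pure arithmetic lemmas -/

lemma wb_half (q w b w' b' : ℕ) (hq : 2 ≤ q) (h : w + b ≤ q) (h' : w' + b' ≤ q)
    (hle : w + b ≤ w' + b')
    (hc : q * (w + b) + b = q * (w' + b') + b') : w = w' ∧ b = b' := by
  obtain ⟨u, hu⟩ := Nat.exists_eq_add_of_le hle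
  have h2 : q * (w + b + u) = q * (w + b) + q * u := by ring
  rw [hu, h2, add_assoc] at hc
  have hb := Nat.add_left_cancel hc
  rcases u with _ | u'
  · simp only [Nat.mul_zero, Nat.zero_add] at hb
    omega
  · exfalso
    have hq1 : q ≤ q * (u' + 1) := Nat.le_mul_of_pos_right q (by omega)
    obtain ⟨m, hm⟩ : ∃ m, q * (u' + 1) = m := ⟨_, rfl⟩
    rw [hm] at hb hq1
    omega

lemma wb_unique (q w b w' b' : ℕ) (hq : 2 ≤ q) (h : w + b ≤ q) (h' : w' + b' ≤ q)
    (he : q ^ 3 * w + (q ^ 3 + q ^ 2) * b = q ^ 3 * w' + (q ^ 3 + q ^ 2) * b') :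
    w = w' ∧ b = b' := by
  have he' : (q : ℤ) ^ 3 * w + ((q : ℤ) ^ 3 + (q : ℤ) ^ 2) * b
      = (q : ℤ) ^ 3 * w' + ((q : ℤ) ^ 3 + (q : ℤ) ^ 2) * b' := by exact_mod_cast he
  have h2 : (q : ℤ) * (w + b) + b = (q : ℤ) * (w' + b') + b' := by
    have hq0 : ((q : ℤ) ^ 2) ≠ 0 := by positivity
    refine mul_left_cancel₀ hq0 ?_
    linear_combination he'
  have hc : q * (w + b) + b = q * (w' + b') + b' := by exact_mod_cast h2
  rcases le_total (w + b) (w' + b') with hle | hle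
  · exact wb_half q w b w' b' hq h h' hle hc
  · obtain ⟨h1, h2⟩ := wb_half q w' b' w b hq h' h hle hc.symm
    exact ⟨h1.symm, h2.symm⟩

lemma b_unique (q w b w' b' : ℕ) (hq : 2 ≤ q) (hs : w + b = w' + b')
    (he : q ^ 3 * w + (q ^ 3 + q ^ 2) * b = q ^ 3 * w' + (q ^ 3 + q ^ 2) * b') : b = b' := by
  have he' : (q : ℤ) ^ 3 * w + ((q : ℤ) ^ 3 + (q : ℤ) ^ 2) * b
      = (q : ℤ) ^ 3 * w' + ((q : ℤ) ^ 3 + (q : ℤ) ^ 2) * b' := by exact_mod_cast he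
  have hs' : (w : ℤ) + b = (w' : ℤ) + b' := by exact_mod_cast hs
  have h2 : (b : ℤ) = b' := by
    have hq0 : ((q : ℤ) ^ 2) ≠ 0 := by positivity
    refine mul_left_cancel₀ hq0 ?_
    linear_combination he' - (q : ℤ) ^ 3 * hs'
  exact_mod_cast h2

set_option maxHeartbeats 1000000 in
lemma endgame (q h m B w0 b0 wS : ℕ) (hq : 2 ≤ q) (hhm : h = m + 1)
    (hwb : w0 + b0 ≤ q)
    (hA1 : 2 * h = q ^ 3 * w0 + (q ^ 3 + q ^ 2) * b0)
    (hwbS : wS + B = q ^ 3 + q ^ 2 + q + 1)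
    (hA2 : 2 * ((q ^ 3 + q ^ 2 + q + 1) + m * (q ^ 2 + q + 1))
      = q ^ 3 * wS + (q ^ 3 + q ^ 2) * B)
    (hA3 : 2 * (h * B) = (q ^ 3 + q ^ 2) * ((q ^ 3 + q ^ 2 + q + 1) * b0)) : b0 = 1 := by
  have hQ : (2 : ℤ) ≤ (q : ℤ) := by exact_mod_cast hq
  have hQ0 : ((q : ℤ)) ≠ 0 := by positivity
  have hQ20 : ((q : ℤ) ^ 2) ≠ 0 := by positivity
  have hA1' : 2 * (h : ℤ) = (q : ℤ) ^ 3 * w0 + ((q : ℤ) ^ 3 + (q : ℤ) ^ 2) * b0 := by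
    exact_mod_cast hA1
  have hwbS' : (wS : ℤ) + B = (q : ℤ) ^ 3 + (q : ℤ) ^ 2 + (q : ℤ) + 1 := by exact_mod_cast hwbS
  have hm' : (m : ℤ) = (h : ℤ) - 1 := by
    have : (h : ℤ) = (m : ℤ) + 1 := by exact_mod_cast hhm
    omega
  have hA2' : 2 * (((q : ℤ) ^ 3 + (q : ℤ) ^ 2 + (q : ℤ) + 1)
      + ((h : ℤ) - 1) * ((q : ℤ) ^ 2 + (q : ℤ) + 1))
      = (q : ℤ) ^ 3 * wS + ((q : ℤ) ^ 3 + (q : ℤ) ^ 2) * B := by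
    rw [← hm']
    exact_mod_cast hA2
  have hA3' : 2 * ((h : ℤ) * B) = ((q : ℤ) ^ 3 + (q : ℤ) ^ 2)
      * (((q : ℤ) ^ 3 + (q : ℤ) ^ 2 + (q : ℤ) + 1) * b0) := by exact_mod_cast hA3
  obtain ⟨c, hcdef⟩ : ∃ c : ℤ, c = (q : ℤ) * w0 + ((q : ℤ) + 1) * b0 := ⟨_, rfl⟩
  have h2h : 2 * (h : ℤ) = (q : ℤ) ^ 2 * c := by
    linear_combination hA1' - (q : ℤ) ^ 2 * hcdef
  have hB : (q : ℤ) ^ 2 * (B : ℤ) = (q : ℤ) ^ 2 * (c * ((q : ℤ) ^ 2 + (q : ℤ) + 1) + (q : ℤ)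
      - ((q : ℤ) ^ 4 + (q : ℤ) ^ 3 + (q : ℤ) ^ 2)) := by
    linear_combination ((q : ℤ) ^ 2 + (q : ℤ) + 1) * h2h - hA2' - (q : ℤ) ^ 3 * hwbS'
  have hBe : (B : ℤ) = c * ((q : ℤ) ^ 2 + (q : ℤ) + 1) + (q : ℤ)
      - ((q : ℤ) ^ 4 + (q : ℤ) ^ 3 + (q : ℤ) ^ 2) := mul_left_cancel₀ hQ20 hB
  have hcB0 : (q : ℤ) ^ 2 * (c * B) = (q : ℤ) ^ 2 * (((q : ℤ) + 1)
      * (((q : ℤ) ^ 3 + (q : ℤ) ^ 2 + (q : ℤ) + 1) * b0)) := by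
    linear_combination hA3' - (B : ℤ) * h2h
  have hcB : c * (B : ℤ) = ((q : ℤ) + 1) * (((q : ℤ) ^ 3 + (q : ℤ) ^ 2 + (q : ℤ) + 1) * b0) :=
    mul_left_cancel₀ hQ20 hcB0
  have hb0q : (b0 : ℤ) ≤ (q : ℤ) := by exact_mod_cast show b0 ≤ q by omega
  have hb00 : (0 : ℤ) ≤ (b0 : ℤ) := by positivity
  have hw00 : (0 : ℤ) ≤ (w0 : ℤ) := by positivity
  have hB0 : (0 : ℤ) ≤ (B : ℤ) := by positivity
  have hX0 : (0 : ℤ) ≤ (q : ℤ) ^ 2 + (q : ℤ) + 1 := by positivity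
  -- c ≥ q^2
  have hcge : (q : ℤ) ^ 2 ≤ c := by
    by_contra hlt
    push_neg at hlt
    have hc1 : c ≤ (q : ℤ) ^ 2 - 1 := by omega
    nlinarith [mul_le_mul_of_nonneg_right hc1 hX0]
  -- w0 + b0 = q
  have hwbq : (w0 : ℤ) + b0 ≤ (q : ℤ) := by exact_mod_cast hwb
  have hs : (w0 : ℤ) + b0 = (q : ℤ) := by
    by_contra hne
    have hlt : (w0 : ℤ) + b0 ≤ (q : ℤ) - 1 := by omega
    have hc2 : c ≤ (q : ℤ) * ((q : ℤ) - 1) + b0 := by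
      nlinarith [mul_le_mul_of_nonneg_left hlt (show (0:ℤ) ≤ (q : ℤ) by linarith)]
    nlinarith
  have hc_eq : c = (q : ℤ) ^ 2 + b0 := by
    linear_combination hcdef + (q : ℤ) * hs
  have hkey : ((b0 : ℤ) - 1) * ((b0 : ℤ) * ((q : ℤ) ^ 2 + (q : ℤ) + 1) - (q : ℤ) ^ 3) = 0 := by
    have hBd : (B : ℤ) = (b0 : ℤ) * ((q : ℤ) ^ 2 + (q : ℤ) + 1) + (q : ℤ) := by
      rw [hBe, hc_eq]; ring
    rw [hc_eq, hBd] at hcB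
    linear_combination hcB
  rcases mul_eq_zero.mp hkey with h1 | h2
  · have : (b0 : ℤ) = 1 := by omega
    exact_mod_cast this
  · exfalso
    have hd : (b0 : ℤ) * ((q : ℤ) ^ 2 + (q : ℤ) + 1) = (q : ℤ) ^ 3 := by linarith
    have hQd : (q : ℤ) ∣ (b0 : ℤ) :=
      ⟨(q : ℤ) ^ 2 - (b0 : ℤ) * (q : ℤ) - b0, by linear_combination hd⟩
    obtain ⟨k, hk⟩ := hQd
    rw [hk] at hd
    have hk' : k * ((q : ℤ) ^ 2 + (q : ℤ) + 1) = (q : ℤ) ^ 2 := by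
      refine mul_left_cancel₀ hQ0 ?_
      linear_combination hd
    have hk0 : 0 ≤ k := by
      by_contra hneg
      push_neg at hneg
      have hk1 : k ≤ -1 := by omega
      nlinarith [mul_le_mul_of_nonneg_left hk1 (show (0:ℤ) ≤ (q : ℤ) by linarith)]
    rcases eq_or_lt_of_le hk0 with h0 | hpos
    · rw [← h0] at hk'
      simp at hk'
      nlinarith
    · have hk1 : 1 ≤ k := by omega
      nlinarith [mul_le_mul_of_nonneg_right hk1 hX0]


/-! ### colour classes: disjointness and covering -/

lemma white_black_disj (q : ℕ) (hq : 0 < q) (H : Set (PGSolid F))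
    (U : Submodule F (Fin 5 → F)) : Disjoint (whiteIn q H U) (blackIn q H U) := by
  rw [Set.disjoint_left]
  rintro P ⟨hw, _⟩ ⟨hb, _⟩
  rw [White] at hw
  rw [Black] at hb
  rw [hw] at hb
  have h4 : q ^ 3 + 0 = q ^ 3 + q ^ 2 := by simpa using hb
  exact (pow_pos hq 2).ne' (Nat.add_left_cancel h4).symm

lemma solid_wb (q : ℕ) (hq : 0 < q) (H : Set (PGSolid F)) (hI : CondI q H)
    {S₀ : PGSolid F} (hS₀ : S₀ ∈ H) :
    (whiteIn q H S₀.1).ncard + (blackIn q H S₀.1).ncard = (ptsIn S₀.1).ncard := by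
  have hcover : whiteIn q H S₀.1 ∪ blackIn q H S₀.1 = ptsIn S₀.1 := by
    ext P
    simp only [Set.mem_union, whiteIn, blackIn, Set.mem_setOf_eq, ptsIn]
    constructor
    · rintro (⟨_, h⟩ | ⟨_, h⟩) <;> exact h
    · intro hP
      have hmem : S₀ ∈ solidsThrough H P := ⟨hS₀, hP⟩
      have hpos : (solidsThrough H P).ncard ≠ 0 := by
        intro h0
        rw [Set.ncard_eq_zero (Set.toFinite _)] at h0
        rw [h0] at hmem
        exact hmem
      rcases hI P with h | h | h
      · exact absurd h hpos
      · exact Or.inl ⟨h, hP⟩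
      · exact Or.inr ⟨h, hP⟩
  rw [← Set.ncard_union_eq (white_black_disj q hq H S₀.1) (Set.toFinite _) (Set.toFinite _),
    hcover]

end Aux

theorem stmt5 (q : ℕ) (hq : ∃ n : ℕ, 0 < n ∧ q = 2 ^ n)
    (F : Type*) [Field F] [Fintype F] (hcard : Fintype.card F = q)
    (H : Set (PGSolid F)) (hne : H.Nonempty) (hI : CondI q H)
    (R : PGPoint F) (hR : Red H R) :
    ∀ S : PGSolid F, R.1 ≤ S.1 → (blackIn q H S.1).ncard = q ^ 2 + q + 1 := by
  intro S hRS
  subst hcard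
  classical
  have hq2 : 2 ≤ Fintype.card F := Fintype.one_lt_card
  have hq0 : 0 < Fintype.card F := by omega
  have hRnotBlack : ∀ U : Submodule F (Fin 5 → F), R ∉ blackIn (Fintype.card F) H U :=
    fun U h => (not_white_red hq0 hR).2 h.1
  have hh1 : 1 ≤ H.ncard := (Set.ncard_pos (Set.toFinite H)).mpr hne
  obtain ⟨m, hm⟩ : ∃ m, H.ncard = m + 1 := ⟨H.ncard - 1, by omega⟩
  -- the line equation
  have lineEq : ∀ L : PGLine F, R.1 ≤ L.1 →
      2 * H.ncard = (Fintype.card F) ^ 3 * (whiteIn (Fintype.card F) H L.1).ncard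
        + ((Fintype.card F) ^ 3 + (Fintype.card F) ^ 2)
          * (blackIn (Fintype.card F) H L.1).ncard := by
    intro L hL
    rw [← line_sum H R hR L hL]
    exact class_sum (Fintype.card F) H hI hq0 L.1
  -- the line bound
  have lineBd : ∀ L : PGLine F, R.1 ≤ L.1 →
      (whiteIn (Fintype.card F) H L.1).ncard + (blackIn (Fintype.card F) H L.1).ncard
        ≤ Fintype.card F := by
    intro L hL
    rw [← Set.ncard_union_eq (white_black_disj (Fintype.card F) hq0 H L.1) (Set.toFinite _)
      (Set.toFinite _)]
    have hsub : whiteIn (Fintype.card F) H L.1 ∪ blackIn (Fintype.card F) H L.1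
        ⊆ ptsIn L.1 \ {R} := by
      rintro P (⟨hw, hPL⟩ | ⟨hb, hPL⟩)
      · exact ⟨hPL, fun he => (not_white_red hq0 hR).1 (he ▸ hw)⟩
      · exact ⟨hPL, fun he => (not_white_red hq0 hR).2 (he ▸ hb)⟩
    calc (whiteIn (Fintype.card F) H L.1 ∪ blackIn (Fintype.card F) H L.1).ncard
        ≤ (ptsIn L.1 \ {R}).ncard := Set.ncard_le_ncard hsub (Set.toFinite _)
      _ = Fintype.card F := by
          rw [Set.ncard_diff_singleton_of_mem (show R ∈ ptsIn L.1 from hL),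
            ptsIn_line_ncard]
          omega
  -- lines through R inside S
  have hlinesS : (linesThrough R S.1).ncard = (Fintype.card F) ^ 2 + Fintype.card F + 1 := by
    apply Nat.eq_of_mul_eq_mul_right hq0
    rw [lines_card R hRS, ptsIn_solid_ncard S.1 S.2]
    have h1 : 1 ≤ Fintype.card F ^ 3 + Fintype.card F ^ 2 + Fintype.card F + 1 := by omega
    zify [h1]
    ring
  have hLex : (linesThrough R S.1).Nonempty := by
    apply Set.nonempty_of_ncard_ne_zero
    rw [hlinesS]
    positivity
  obtain ⟨L₀, hL₀⟩ := hLex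
  set w0 := (whiteIn (Fintype.card F) H L₀.1).ncard with hw0def
  set b0 := (blackIn (Fintype.card F) H L₀.1).ncard with hb0def
  have hconst : ∀ L : PGLine F, R.1 ≤ L.1 →
      (blackIn (Fintype.card F) H L.1).ncard = b0 := by
    intro L hL
    exact (wb_unique (Fintype.card F) _ _ _ _ hq2 (lineBd L hL) (lineBd L₀ hL₀.1)
      ((lineEq L hL).symm.trans (lineEq L₀ hL₀.1))).2
  -- solid quantities
  obtain ⟨S₀, hS₀⟩ := hne
  set B := (blackIn (Fintype.card F) H S₀.1).ncard with hBdef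
  set wS := (whiteIn (Fintype.card F) H S₀.1).ncard with hwSdef
  have hwbS : wS + B
      = (Fintype.card F) ^ 3 + (Fintype.card F) ^ 2 + Fintype.card F + 1 := by
    rw [hwSdef, hBdef, solid_wb (Fintype.card F) hq0 H hI hS₀, ptsIn_solid_ncard S₀.1 S₀.2]
  have hA2 : 2 * (((Fintype.card F) ^ 3 + (Fintype.card F) ^ 2 + Fintype.card F + 1)
      + m * ((Fintype.card F) ^ 2 + Fintype.card F + 1))
      = (Fintype.card F) ^ 3 * wS + ((Fintype.card F) ^ 3 + (Fintype.card F) ^ 2) * B := by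
    have h1 := solid_sum H hS₀
    rw [hm] at h1
    simp only [Nat.add_sub_cancel] at h1
    rw [← h1]
    exact class_sum (Fintype.card F) H hI hq0 S₀.1
  have hBconst : ∀ S' ∈ H.toFinset, (blackIn (Fintype.card F) H S'.1).ncard = B := by
    intro S' hS'
    rw [Set.mem_toFinset] at hS'
    refine b_unique (Fintype.card F) (whiteIn (Fintype.card F) H S'.1).ncard _ wS B hq2 ?_ ?_
    · rw [solid_wb (Fintype.card F) hq0 H hI hS', hwSdef, hBdef,
        solid_wb (Fintype.card F) hq0 H hI hS₀, ptsIn_solid_ncard S'.1 S'.2,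
        ptsIn_solid_ncard S₀.1 S₀.2]
    · rw [← class_sum (Fintype.card F) H hI hq0 S'.1, hwSdef, hBdef,
        ← class_sum (Fintype.card F) H hI hq0 S₀.1, solid_sum H hS', solid_sum H hS₀]
  have hsumB : ∑ S' ∈ H.toFinset, (blackIn (Fintype.card F) H S'.1).ncard = H.ncard * B := by
    rw [Finset.sum_congr rfl hBconst, Finset.sum_const, smul_eq_mul,
      ← Set.ncard_eq_toFinset_card']
  have hlinesTop : (linesThrough R (⊤ : Submodule F (Fin 5 → F))).ncard
      = (Fintype.card F) ^ 3 + (Fintype.card F) ^ 2 + Fintype.card F + 1 := by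
    apply Nat.eq_of_mul_eq_mul_right hq0
    rw [lines_card R le_top, ptsIn_top_ncard]
    have h1 : (1:ℕ) ≤ Fintype.card F ^ 4 + Fintype.card F ^ 3 + Fintype.card F ^ 2
      + Fintype.card F + 1 := by omega
    zify [h1]
    ring
  have hblackPencil : ∀ W : Submodule F (Fin 5 → F), R.1 ≤ W →
      (blackIn (Fintype.card F) H W).ncard
        = ∑ L ∈ (linesThrough R W).toFinset, (blackIn (Fintype.card F) H L.1).ncard := by
    intro W hRW
    rw [pencil R hRW (blackIn (Fintype.card F) H W) (hRnotBlack W) (fun P hP => hP.2)]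
    refine Finset.sum_congr rfl (fun L hL => ?_)
    rw [Set.mem_toFinset] at hL
    congr 1
    ext P
    simp only [Set.mem_inter_iff, blackIn, Set.mem_setOf_eq, ptsIn]
    constructor
    · rintro ⟨⟨hb, _⟩, hPL⟩
      exact ⟨hb, hPL⟩
    · rintro ⟨hb, hPL⟩
      exact ⟨⟨hb, le_trans hPL hL.2⟩, hPL⟩
  have hbTop : (blackIn (Fintype.card F) H (⊤ : Submodule F (Fin 5 → F))).ncard
      = ((Fintype.card F) ^ 3 + (Fintype.card F) ^ 2 + Fintype.card F + 1) * b0 := by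
    rw [hblackPencil ⊤ le_top]
    have hc : ∀ L ∈ (linesThrough R (⊤ : Submodule F (Fin 5 → F))).toFinset,
        (blackIn (Fintype.card F) H L.1).ncard = b0 :=
      fun L hL => hconst L (Set.mem_toFinset.mp hL).1
    rw [Finset.sum_congr rfl hc, Finset.sum_const, smul_eq_mul,
      ← Set.ncard_eq_toFinset_card', hlinesTop]
  have hA3 : 2 * (H.ncard * B) = ((Fintype.card F) ^ 3 + (Fintype.card F) ^ 2)
      * (((Fintype.card F) ^ 3 + (Fintype.card F) ^ 2 + Fintype.card F + 1) * b0) := by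
    rw [← hsumB, incidence (Fintype.card F) H, Finset.mul_sum]
    have hc : ∀ P ∈ (blackIn (Fintype.card F) H (⊤ : Submodule F (Fin 5 → F))).toFinset,
        2 * (solidsThrough H P).ncard = (Fintype.card F) ^ 3 + (Fintype.card F) ^ 2 :=
      fun P hP => (Set.mem_toFinset.mp hP).1
    rw [Finset.sum_congr rfl hc, Finset.sum_const, smul_eq_mul,
      ← Set.ncard_eq_toFinset_card', hbTop]
    ring
  have hA1 : 2 * H.ncard = (Fintype.card F) ^ 3 * w0
      + ((Fintype.card F) ^ 3 + (Fintype.card F) ^ 2) * b0 := lineEq L₀ hL₀.1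
  have hb01 : b0 = 1 :=
    endgame (Fintype.card F) H.ncard m B w0 b0 wS hq2 hm (lineBd L₀ hL₀.1) hA1 hwbS hA2 hA3
  rw [hblackPencil S.1 hRS]
  have hc : ∀ L ∈ (linesThrough R S.1).toFinset,
      (blackIn (Fintype.card F) H L.1).ncard = 1 :=
    fun L hL => (hconst L (Set.mem_toFinset.mp hL).1).trans hb01
  rw [Finset.sum_congr rfl hc, Finset.sum_const, smul_eq_mul,
    ← Set.ncard_eq_toFinset_card', hlinesS, mul_one]
end
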